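/- Let p ∈ (1,∞) and p' = p/(p−1). There exist constants c, C > 0 depending only on p such that for all δ ≥ 0, all shifts a ≥ 0, and all t ≥ 0 one has c·(δ+a+t)^{p−2} t² ≤ φ_a(t) ≤ C·(δ+a+t)^{p−2} t², and also c·((δ+a)^{p−1} + t)^{p'−2} t² ≤ (φ_a)*(t) ≤ C·((δ+a)^{p−1} + t)^{p'−2} t², where (φ_a)* is the convex conjugate of φ_a. -/

import Mathlib

open Real Set

/-- The derivative `φ'(t) = (δ+t)^(p-2)·t` of the N-function `φ = φ_{p,δ}`. -/
noncomputable def phiDeriv (p δ t : ℝ) : ℝ := (δ + t) ^ (p - 2) * t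

/-- The shifted N-function `φ_a(t) = ∫₀ᵗ φ'(a+s)·s/(a+s) ds`. -/
noncomputable def phiShift (p δ a t : ℝ) : ℝ :=
  ∫ s in (0:ℝ)..t, phiDeriv p δ (a + s) * s / (a + s)

/-- The convex conjugate of an N-function: `ψ*(s) = sup_{t ≥ 0} (s·t − ψ(t))`. -/
noncomputable def conjFun (ψ : ℝ → ℝ) (s : ℝ) : ℝ :=
  sSup ((fun t => s * t - ψ t) '' Set.Ici 0)

namespace PhiAux

/-- `G r ν x = (ν+x)^(r-2) x`. -/
noncomputable def G (r ν x : ℝ) : ℝ := (ν + x) ^ (r - 2) * x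

lemma G_nonneg {r ν x : ℝ} (hν : 0 ≤ ν) (hx : 0 ≤ x) : 0 ≤ G r ν x := by
  have : (0:ℝ) ≤ (ν + x) ^ (r - 2) := Real.rpow_nonneg (by linarith) _
  exact mul_nonneg this hx

lemma G_pos {r ν x : ℝ} (hν : 0 ≤ ν) (hx : 0 < x) : 0 < G r ν x := by
  have : (0:ℝ) < (ν + x) ^ (r - 2) := Real.rpow_pos_of_pos (by linarith) _
  exact mul_pos this hx

lemma G_eq {r ν x : ℝ} (hν : 0 ≤ ν) (hx : 0 < x) :
    G r ν x = (ν + x) ^ (r - 1) * (x / (ν + x)) := by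
  have h : (0:ℝ) < ν + x := by linarith
  have : (ν + x) ^ (r - 1) = (ν + x) ^ (r - 2) * (ν + x) := by
    rw [show r - 1 = (r - 2) + 1 by ring, Real.rpow_add h, Real.rpow_one]
  rw [G, this]
  field_simp

lemma G_mono {r ν : ℝ} (hr : 1 < r) (hν : 0 ≤ ν) {x y : ℝ} (hx : 0 < x) (hxy : x ≤ y) :
    G r ν x ≤ G r ν y := by
  have hy : 0 < y := lt_of_lt_of_le hx hxy
  rw [G_eq hν hx, G_eq hν hy]
  have h1 : (ν + x) ^ (r - 1) ≤ (ν + y) ^ (r - 1) :=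
    Real.rpow_le_rpow (by linarith) (by linarith) (by linarith)
  have h2 : x / (ν + x) ≤ y / (ν + y) := by
    rw [div_le_div_iff₀ (by linarith) (by linarith)]; nlinarith
  exact mul_le_mul h1 h2 (by positivity) (by positivity)

lemma shift_lower {r ν x : ℝ} (hr : 1 < r) (hν : 0 ≤ ν) (hx : 0 < x) :
    min 2⁻¹ (2 ^ (1 - r)) * (ν + x) ^ (r - 1) ≤ ν ^ (r - 1) + G r ν x := by
  have hνx : (0:ℝ) < ν + x := by linarith
  have hG : 0 ≤ G r ν x := G_nonneg hν hx.le
  have hνp : (0:ℝ) ≤ ν ^ (r - 1) := Real.rpow_nonneg hν _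
  rcases le_total x ν with h | h
  · -- ν ≥ (ν+x)/2, use the ν^{r-1} term
    have h1 : ((ν + x) / 2) ^ (r - 1) ≤ ν ^ (r - 1) :=
      Real.rpow_le_rpow (by positivity) (by linarith) (by linarith)
    have h2 : ((ν + x) / 2) ^ (r - 1) = 2 ^ (1 - r) * (ν + x) ^ (r - 1) := by
      rw [Real.div_rpow hνx.le (by norm_num : (0:ℝ) ≤ 2),
        show (1 : ℝ) - r = -(r-1) by ring, Real.rpow_neg (by norm_num : (0:ℝ) ≤ 2)]
      field_simp
    have h3 : min 2⁻¹ (2 ^ (1 - r)) * (ν + x) ^ (r - 1) ≤ 2 ^ (1 - r) * (ν + x) ^ (r - 1) := by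
      apply mul_le_mul_of_nonneg_right (min_le_right _ _) (by positivity)
    nlinarith [h3, h2 ▸ h1]
  · -- x ≥ (ν+x)/2, use the G term
    have h1 : (ν + x) ^ (r - 2) * ((ν + x) / 2) ≤ G r ν x := by
      apply mul_le_mul_of_nonneg_left (by linarith) (Real.rpow_nonneg hνx.le _)
    have h2 : (ν + x) ^ (r - 2) * (ν + x) = (ν + x) ^ (r - 1) := by
      rw [show r - 1 = (r - 2) + 1 by ring, Real.rpow_add hνx, Real.rpow_one]
    have h3 : min 2⁻¹ (2 ^ (1 - r)) * (ν + x) ^ (r - 1) ≤ 2⁻¹ * (ν + x) ^ (r - 1) := by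
      apply mul_le_mul_of_nonneg_right (min_le_left _ _) (by positivity)
    nlinarith [h1, h2, h3]

lemma shift_upper {r ν x : ℝ} (hr : 1 < r) (hν : 0 ≤ ν) (hx : 0 < x) :
    ν ^ (r - 1) + G r ν x ≤ 2 * (ν + x) ^ (r - 1) := by
  have hνx : (0:ℝ) < ν + x := by linarith
  have h1 : ν ^ (r - 1) ≤ (ν + x) ^ (r - 1) :=
    Real.rpow_le_rpow hν (by linarith) (by linarith)
  have h2 : G r ν x ≤ (ν + x) ^ (r - 1) := by
    rw [show r - 1 = (r - 2) + 1 by ring, Real.rpow_add hνx, Real.rpow_one]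
    exact mul_le_mul_of_nonneg_left (by linarith) (Real.rpow_nonneg hνx.le _)
  linarith

lemma dual_exp_mul {r : ℝ} (hr : 1 < r) : (r - 1) * (r / (r - 1) - 2) = 2 - r := by
  have h : r - 1 ≠ 0 := by linarith
  field_simp
  ring

/-- key: `G q b (G r ν x) ≥ κ x` with `q = r/(r-1)`, `b = ν^(r-1)`. -/
lemma G_dual_lower {r : ℝ} (hr : 1 < r) :
    ∃ κ : ℝ, 0 < κ ∧ ∀ ν : ℝ, 0 ≤ ν → ∀ x : ℝ, 0 < x →
      κ * x ≤ G (r / (r - 1)) (ν ^ (r - 1)) (G r ν x) := by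
  set q := r / (r - 1) with hq
  set m : ℝ := min 2⁻¹ (2 ^ (1 - r)) with hm
  have hm0 : 0 < m := lt_min (by norm_num) (by positivity)
  refine ⟨min (m ^ (q - 2)) (2 ^ (q - 2)), lt_min (by positivity) (by positivity),
    fun ν hν x hx => ?_⟩
  have hνx : (0:ℝ) < ν + x := by linarith
  set g := G r ν x with hgdef
  have hg : 0 < g := G_pos hν hx
  have hlow : m * (ν + x) ^ (r - 1) ≤ ν ^ (r - 1) + g := shift_lower hr hν hx
  have hupp : ν ^ (r - 1) + g ≤ 2 * (ν + x) ^ (r - 1) := shift_upper hr hν hx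
  have hbg : 0 < ν ^ (r - 1) + g := by positivity
  have hpow : ((ν + x) ^ (r - 1)) ^ (q - 2) = (ν + x) ^ (2 - r) := by
    rw [← Real.rpow_mul hνx.le, dual_exp_mul hr]
  have key : min (m ^ (q - 2)) (2 ^ (q - 2)) * (ν + x) ^ (2 - r) ≤ (ν ^ (r - 1) + g) ^ (q - 2) := by
    rcases le_total 0 (q - 2) with hqs | hqs
    · calc min (m ^ (q - 2)) (2 ^ (q - 2)) * (ν + x) ^ (2 - r)
          ≤ m ^ (q - 2) * ((ν + x) ^ (r - 1)) ^ (q - 2) := by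
            rw [hpow]
            exact mul_le_mul_of_nonneg_right (min_le_left _ _) (by positivity)
      _ = (m * (ν + x) ^ (r - 1)) ^ (q - 2) := (Real.mul_rpow hm0.le (by positivity)).symm
      _ ≤ (ν ^ (r - 1) + g) ^ (q - 2) := Real.rpow_le_rpow (by positivity) hlow hqs
    · calc min (m ^ (q - 2)) (2 ^ (q - 2)) * (ν + x) ^ (2 - r)
          ≤ 2 ^ (q - 2) * ((ν + x) ^ (r - 1)) ^ (q - 2) := by
            rw [hpow]
            exact mul_le_mul_of_nonneg_right (min_le_right _ _) (by positivity)
      _ = (2 * (ν + x) ^ (r - 1)) ^ (q - 2) := (Real.mul_rpow (by norm_num) (by positivity)).symm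
      _ ≤ (ν ^ (r - 1) + g) ^ (q - 2) := Real.rpow_le_rpow_of_nonpos hbg hupp hqs
  have hgx : g * (ν + x) ^ (2 - r) = x := by
    rw [hgdef, G]
    rw [mul_comm ((ν + x) ^ (r - 2)) x, mul_assoc, ← Real.rpow_add hνx]
    norm_num
  calc min (m ^ (q - 2)) (2 ^ (q - 2)) * x
      = min (m ^ (q - 2)) (2 ^ (q - 2)) * (ν + x) ^ (2 - r) * g := by rw [mul_assoc, mul_comm ((ν+x)^(2-r)) g, hgx]
    _ ≤ (ν ^ (r - 1) + g) ^ (q - 2) * g := mul_le_mul_of_nonneg_right key hg.le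
    _ = G q (ν ^ (r - 1)) g := rfl

lemma G_dual_upper {r : ℝ} (hr : 1 < r) :
    ∃ K : ℝ, 0 < K ∧ ∀ ν : ℝ, 0 ≤ ν → ∀ x : ℝ, 0 < x →
      G (r / (r - 1)) (ν ^ (r - 1)) (G r ν x) ≤ K * x := by
  set q := r / (r - 1) with hq
  set m : ℝ := min 2⁻¹ (2 ^ (1 - r)) with hm
  have hm0 : 0 < m := lt_min (by norm_num) (by positivity)
  refine ⟨max (m ^ (q - 2)) (2 ^ (q - 2)), lt_max_of_lt_left (by positivity),
    fun ν hν x hx => ?_⟩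
  have hνx : (0:ℝ) < ν + x := by linarith
  set g := G r ν x with hgdef
  have hg : 0 < g := G_pos hν hx
  have hlow : m * (ν + x) ^ (r - 1) ≤ ν ^ (r - 1) + g := shift_lower hr hν hx
  have hupp : ν ^ (r - 1) + g ≤ 2 * (ν + x) ^ (r - 1) := shift_upper hr hν hx
  have hbg : 0 < ν ^ (r - 1) + g := by positivity
  have hpow : ((ν + x) ^ (r - 1)) ^ (q - 2) = (ν + x) ^ (2 - r) := by
    rw [← Real.rpow_mul hνx.le, dual_exp_mul hr]
  have key : (ν ^ (r - 1) + g) ^ (q - 2) ≤ max (m ^ (q - 2)) (2 ^ (q - 2)) * (ν + x) ^ (2 - r) := by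
    rcases le_total 0 (q - 2) with hqs | hqs
    · calc (ν ^ (r - 1) + g) ^ (q - 2)
          ≤ (2 * (ν + x) ^ (r - 1)) ^ (q - 2) := Real.rpow_le_rpow hbg.le hupp hqs
      _ = 2 ^ (q - 2) * ((ν + x) ^ (r - 1)) ^ (q - 2) := Real.mul_rpow (by norm_num) (by positivity)
      _ ≤ max (m ^ (q - 2)) (2 ^ (q - 2)) * (ν + x) ^ (2 - r) := by
            rw [hpow]
            exact mul_le_mul_of_nonneg_right (le_max_right _ _) (by positivity)
    · calc (ν ^ (r - 1) + g) ^ (q - 2)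
          ≤ (m * (ν + x) ^ (r - 1)) ^ (q - 2) :=
            Real.rpow_le_rpow_of_nonpos (by positivity) hlow hqs
      _ = m ^ (q - 2) * ((ν + x) ^ (r - 1)) ^ (q - 2) := Real.mul_rpow hm0.le (by positivity)
      _ ≤ max (m ^ (q - 2)) (2 ^ (q - 2)) * (ν + x) ^ (2 - r) := by
            rw [hpow]
            exact mul_le_mul_of_nonneg_right (le_max_left _ _) (by positivity)
  have hgx : g * (ν + x) ^ (2 - r) = x := by
    rw [hgdef, G]
    rw [mul_comm ((ν + x) ^ (r - 2)) x, mul_assoc, ← Real.rpow_add hνx]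
    norm_num
  calc G q (ν ^ (r - 1)) g = (ν ^ (r - 1) + g) ^ (q - 2) * g := rfl
    _ ≤ max (m ^ (q - 2)) (2 ^ (q - 2)) * (ν + x) ^ (2 - r) * g := mul_le_mul_of_nonneg_right key hg.le
    _ = max (m ^ (q - 2)) (2 ^ (q - 2)) * x := by rw [mul_assoc, mul_comm ((ν+x)^(2-r)) g, hgx]

lemma G_scale_upper {r ν : ℝ} (hr : 1 < r) (hν : 0 ≤ ν) {ε x : ℝ} (hε : 0 < ε) (hε1 : ε ≤ 1)
    (hx : 0 < x) : G r ν (ε * x) ≤ max ε (ε ^ (r - 1)) * G r ν x := by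
  have hνx : (0:ℝ) < ν + x := by linarith
  have hεx : (0:ℝ) < ε * x := by positivity
  have hνεx : (0:ℝ) < ν + ε * x := by positivity
  rcases le_total 2 r with h2 | h2
  · have h1 : (ν + ε * x) ^ (r - 2) ≤ (ν + x) ^ (r - 2) :=
      Real.rpow_le_rpow (by positivity) (by nlinarith) (by linarith)
    calc G r ν (ε * x) = (ν + ε * x) ^ (r - 2) * (ε * x) := rfl
      _ ≤ (ν + x) ^ (r - 2) * (ε * x) := mul_le_mul_of_nonneg_right h1 hεx.le
      _ = ε * G r ν x := by rw [G]; ring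
      _ ≤ max ε (ε ^ (r - 1)) * G r ν x :=
          mul_le_mul_of_nonneg_right (le_max_left _ _) (G_nonneg hν hx.le)
  · have hc : ε * (ν + x) ≤ ν + ε * x := by nlinarith
    have h1 : (ν + ε * x) ^ (r - 2) ≤ (ε * (ν + x)) ^ (r - 2) :=
      Real.rpow_le_rpow_of_nonpos (by positivity) hc (by linarith)
    have h2' : (ε * (ν + x)) ^ (r - 2) = ε ^ (r - 2) * (ν + x) ^ (r - 2) :=
      Real.mul_rpow hε.le hνx.le
    have h3 : ε ^ (r - 2) * ε = ε ^ (r - 1) := by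
      rw [show r - 1 = (r - 2) + 1 by ring, Real.rpow_add hε, Real.rpow_one]
    calc G r ν (ε * x) = (ν + ε * x) ^ (r - 2) * (ε * x) := rfl
      _ ≤ ε ^ (r - 2) * (ν + x) ^ (r - 2) * (ε * x) := by
          rw [← h2']; exact mul_le_mul_of_nonneg_right h1 hεx.le
      _ = ε ^ (r - 1) * G r ν x := by rw [G, ← h3]; ring
      _ ≤ max ε (ε ^ (r - 1)) * G r ν x :=
          mul_le_mul_of_nonneg_right (le_max_right _ _) (G_nonneg hν hx.le)

lemma G_scale_lower {r ν : ℝ} (hr : 1 < r) (hν : 0 ≤ ν) {c x : ℝ} (hc : 0 < c) (hc1 : c ≤ 1)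
    (hx : 0 < x) : min c (c ^ (r - 1)) * G r ν x ≤ G r ν (c * x) := by
  have hνx : (0:ℝ) < ν + x := by linarith
  have hcx : (0:ℝ) < c * x := by positivity
  have hνcx : (0:ℝ) < ν + c * x := by positivity
  rcases le_total 2 r with h2 | h2
  · have hc' : c * (ν + x) ≤ ν + c * x := by nlinarith
    have h1 : (c * (ν + x)) ^ (r - 2) ≤ (ν + c * x) ^ (r - 2) :=
      Real.rpow_le_rpow (by positivity) hc' (by linarith)
    have h2' : (c * (ν + x)) ^ (r - 2) = c ^ (r - 2) * (ν + x) ^ (r - 2) :=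
      Real.mul_rpow hc.le hνx.le
    have h3 : c ^ (r - 2) * c = c ^ (r - 1) := by
      rw [show r - 1 = (r - 2) + 1 by ring, Real.rpow_add hc, Real.rpow_one]
    calc min c (c ^ (r - 1)) * G r ν x ≤ c ^ (r - 1) * G r ν x :=
          mul_le_mul_of_nonneg_right (min_le_right _ _) (G_nonneg hν hx.le)
      _ = c ^ (r - 2) * (ν + x) ^ (r - 2) * (c * x) := by rw [G, ← h3]; ring
      _ ≤ (ν + c * x) ^ (r - 2) * (c * x) := by
          rw [← h2']; exact mul_le_mul_of_nonneg_right h1 hcx.le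
      _ = G r ν (c * x) := rfl
  · have h1 : (ν + x) ^ (r - 2) ≤ (ν + c * x) ^ (r - 2) :=
      Real.rpow_le_rpow_of_nonpos hνcx (by nlinarith) (by linarith)
    calc min c (c ^ (r - 1)) * G r ν x ≤ c * G r ν x :=
          mul_le_mul_of_nonneg_right (min_le_left _ _) (G_nonneg hν hx.le)
      _ = (ν + x) ^ (r - 2) * (c * x) := by rw [G]; ring
      _ ≤ (ν + c * x) ^ (r - 2) * (c * x) := mul_le_mul_of_nonneg_right h1 hcx.le
      _ = G r ν (c * x) := rfl


lemma half_pow {e y : ℝ} (hy : 0 ≤ y) : (y / 2) ^ e = 2 ^ (-e) * y ^ e := by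
  rw [Real.div_rpow hy (by norm_num : (0:ℝ) ≤ 2), Real.rpow_neg (by norm_num : (0:ℝ) ≤ 2)]
  field_simp

lemma integrand_nonneg {p μ s : ℝ} (hμ : 0 ≤ μ) (hs : 0 ≤ s) :
    0 ≤ (μ + s) ^ (p - 2) * s :=
  mul_nonneg (Real.rpow_nonneg (by linarith) _) hs

lemma integrable_aux {p : ℝ} (hp : 1 < p) {μ : ℝ} (hμ : 0 ≤ μ) {t : ℝ} (ht : 0 ≤ t) :
    IntervalIntegrable (fun s => (μ + s) ^ (p - 2) * s) MeasureTheory.volume 0 t := by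
  apply ContinuousOn.intervalIntegrable
  rw [uIcc_of_le ht]
  rcases eq_or_lt_of_le hμ with h0 | h0
  · have hμ0 : μ = 0 := h0.symm
    have hcont : ContinuousOn (fun s : ℝ => s ^ (p - 1)) (Icc 0 t) := by
      apply Continuous.continuousOn
      exact continuous_iff_continuousAt.mpr fun x =>
        Real.continuousAt_rpow_const x (p - 1) (Or.inr (by linarith))
    apply hcont.congr
    intro s hs
    by_cases hs0 : s = 0
    · subst hs0
      simp [hμ0, Real.zero_rpow (show p - 1 ≠ 0 by linarith)]
    · have hs' : 0 < s := lt_of_le_of_ne hs.1 (Ne.symm hs0)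
      simp only [hμ0, zero_add]
      rw [show p - 1 = p - 2 + 1 by ring, Real.rpow_add hs', Real.rpow_one]
  · apply ContinuousOn.mul _ continuousOn_id
    intro s hs
    apply ContinuousAt.continuousWithinAt
    have h1 : ContinuousAt (fun y : ℝ => y ^ (p - 2)) (μ + s) :=
      Real.continuousAt_rpow_const _ _ (Or.inl (by nlinarith [hs.1]))
    exact h1.comp ((continuous_const.add continuous_id).continuousAt)

lemma F_lower {p : ℝ} (hp : 1 < p) :
    ∃ c1 : ℝ, 0 < c1 ∧ c1 ≤ 1 ∧ ∀ μ : ℝ, 0 ≤ μ → ∀ t : ℝ, 0 ≤ t →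
      c1 * ((μ + t) ^ (p - 2) * t ^ 2) ≤ ∫ s in (0:ℝ)..t, (μ + s) ^ (p - 2) * s := by
  set m : ℝ := min 1 (2 ^ (-(p - 2))) with hm
  have hm0 : 0 < m := lt_min one_pos (by positivity)
  have hm1 : m ≤ 1 := min_le_left _ _
  refine ⟨3/8 * m, by positivity, by linarith, fun μ hμ t ht => ?_⟩
  rcases eq_or_lt_of_le ht with h0 | h0
  · rw [← h0]; simp
  have hμt : (0:ℝ) < μ + t := by linarith
  have hint : IntervalIntegrable (fun s => (μ + s) ^ (p - 2) * s) MeasureTheory.volume 0 t :=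
    integrable_aux hp hμ ht
  have hsub1 : uIcc (0:ℝ) (t/2) ⊆ uIcc 0 t := by
    rw [uIcc_of_le ht, uIcc_of_le (by linarith : (0:ℝ) ≤ t/2)]
    exact Icc_subset_Icc le_rfl (by linarith)
  have hsub2 : uIcc (t/2) t ⊆ uIcc 0 t := by
    rw [uIcc_of_le ht, uIcc_of_le (by linarith : t/2 ≤ t)]
    exact Icc_subset_Icc (by linarith) le_rfl
  have hint1 := hint.mono_set hsub1
  have hint2 := hint.mono_set hsub2
  have hsplit := intervalIntegral.integral_add_adjacent_intervals hint1 hint2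
  have hpos1 : 0 ≤ ∫ s in (0:ℝ)..(t/2), (μ + s) ^ (p - 2) * s :=
    intervalIntegral.integral_nonneg (by linarith) fun u hu => integrand_nonneg hμ hu.1
  have hptw : ∀ s ∈ Icc (t/2) t, m * (μ + t) ^ (p - 2) * s ≤ (μ + s) ^ (p - 2) * s := by
    intro s hs
    have hs0 : 0 < s := lt_of_lt_of_le (by linarith) hs.1
    have hμs : 0 < μ + s := by linarith
    have hfac : m * (μ + t) ^ (p - 2) ≤ (μ + s) ^ (p - 2) := by
      rcases le_total 2 p with h2 | h2
      · have e1 : ((μ + t) / 2) ^ (p - 2) ≤ (μ + s) ^ (p - 2) :=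
          Real.rpow_le_rpow (by positivity) (by nlinarith [hs.1]) (by linarith)
        rw [half_pow hμt.le] at e1
        have : m * (μ + t) ^ (p - 2) ≤ 2 ^ (-(p - 2)) * (μ + t) ^ (p - 2) :=
          mul_le_mul_of_nonneg_right (min_le_right _ _) (by positivity)
        linarith
      · have e1 : (μ + t) ^ (p - 2) ≤ (μ + s) ^ (p - 2) :=
          Real.rpow_le_rpow_of_nonpos hμs (by linarith [hs.2]) (by linarith)
        have : m * (μ + t) ^ (p - 2) ≤ 1 * (μ + t) ^ (p - 2) :=
          mul_le_mul_of_nonneg_right hm1 (by positivity)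
        linarith
    exact mul_le_mul_of_nonneg_right hfac hs0.le
  have hmono : ∫ s in (t/2)..t, m * (μ + t) ^ (p - 2) * s
      ≤ ∫ s in (t/2)..t, (μ + s) ^ (p - 2) * s := by
    have hcont : Continuous (fun s : ℝ => m * (μ + t) ^ (p - 2) * s) :=
      continuous_const.mul continuous_id
    apply intervalIntegral.integral_mono_on (by linarith)
    · exact hcont.intervalIntegrable _ _
    · exact hint2
    · exact hptw
  have hval : ∫ s in (t/2)..t, m * (μ + t) ^ (p - 2) * s
      = m * (μ + t) ^ (p - 2) * ((t ^ 2 - (t/2) ^ 2) / 2) := by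
    rw [intervalIntegral.integral_const_mul, integral_id]
  calc 3/8 * m * ((μ + t) ^ (p - 2) * t ^ 2)
      = m * (μ + t) ^ (p - 2) * ((t ^ 2 - (t/2) ^ 2) / 2) := by ring
    _ = ∫ s in (t/2)..t, m * (μ + t) ^ (p - 2) * s := hval.symm
    _ ≤ ∫ s in (t/2)..t, (μ + s) ^ (p - 2) * s := hmono
    _ ≤ ∫ s in (0:ℝ)..t, (μ + s) ^ (p - 2) * s := by linarith [hsplit, hpos1]

lemma F_upper {p : ℝ} (hp : 1 < p) :
    ∃ C1 : ℝ, 0 < C1 ∧ ∀ μ : ℝ, 0 ≤ μ → ∀ t : ℝ, 0 ≤ t →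
      (∫ s in (0:ℝ)..t, (μ + s) ^ (p - 2) * s) ≤ C1 * ((μ + t) ^ (p - 2) * t ^ 2) := by
  refine ⟨2 ^ (-(p - 2)) + 2 ^ (-(p - 2)) / p + 1, by positivity, fun μ hμ t ht => ?_⟩
  set C1 : ℝ := 2 ^ (-(p - 2)) + 2 ^ (-(p - 2)) / p + 1 with hC1
  have hCp : (0:ℝ) < C1 := by positivity
  rcases eq_or_lt_of_le ht with h0 | h0
  · rw [← h0]; simp
  have hμt : (0:ℝ) < μ + t := by linarith
  have hD : (0:ℝ) ≤ (μ + t) ^ (p - 2) * t ^ 2 := by positivity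
  have hint : IntervalIntegrable (fun s => (μ + s) ^ (p - 2) * s) MeasureTheory.volume 0 t :=
    integrable_aux hp hμ ht
  rcases le_total 2 p with h2 | h2
  · -- p ≥ 2
    have hmono : (∫ s in (0:ℝ)..t, (μ + s) ^ (p - 2) * s)
        ≤ ∫ s in (0:ℝ)..t, (μ + t) ^ (p - 2) * s := by
      have hcont : Continuous (fun s : ℝ => (μ + t) ^ (p - 2) * s) :=
        continuous_const.mul continuous_id
      apply intervalIntegral.integral_mono_on ht hint (hcont.intervalIntegrable _ _)
      intro s hs
      exact mul_le_mul_of_nonneg_right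
        (Real.rpow_le_rpow (by linarith [hs.1]) (by linarith [hs.2]) (by linarith)) hs.1
    have hval : ∫ s in (0:ℝ)..t, (μ + t) ^ (p - 2) * s
        = (μ + t) ^ (p - 2) * ((t ^ 2 - 0 ^ 2) / 2) := by
      rw [intervalIntegral.integral_const_mul, integral_id]
    have h12 : (μ + t) ^ (p - 2) * ((t ^ 2 - 0 ^ 2) / 2) ≤ C1 * ((μ + t) ^ (p - 2) * t ^ 2) := by
      have : (μ + t) ^ (p - 2) * ((t ^ 2 - 0 ^ 2) / 2) = 1/2 * ((μ + t) ^ (p - 2) * t ^ 2) := by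
        ring
      rw [this]
      apply mul_le_mul_of_nonneg_right _ hD
      have hA2 : (0:ℝ) ≤ 2 ^ (-(p - 2)) := by positivity
      have hB2 : (0:ℝ) ≤ 2 ^ (-(p - 2)) / p := by positivity
      rw [hC1]
      linarith
    exact le_trans hmono (le_trans (le_of_eq hval) h12)
  · rcases le_total t μ with htμ | htμ
    · -- t ≤ μ
      have hμ0 : 0 < μ := lt_of_lt_of_le h0 htμ
      have hmono : (∫ s in (0:ℝ)..t, (μ + s) ^ (p - 2) * s)
          ≤ ∫ s in (0:ℝ)..t, 2 ^ (-(p - 2)) * (μ + t) ^ (p - 2) * s := by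
        have hcont : Continuous (fun s : ℝ => 2 ^ (-(p - 2)) * (μ + t) ^ (p - 2) * s) :=
          continuous_const.mul continuous_id
        apply intervalIntegral.integral_mono_on ht hint (hcont.intervalIntegrable _ _)
        intro s hs
        have e1 : (μ + s) ^ (p - 2) ≤ ((μ + t) / 2) ^ (p - 2) :=
          Real.rpow_le_rpow_of_nonpos (by positivity) (by nlinarith [hs.1]) (by linarith)
        rw [half_pow hμt.le] at e1
        exact mul_le_mul_of_nonneg_right e1 hs.1
      have hval : ∫ s in (0:ℝ)..t, 2 ^ (-(p - 2)) * (μ + t) ^ (p - 2) * s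
          = 2 ^ (-(p - 2)) * (μ + t) ^ (p - 2) * ((t ^ 2 - 0 ^ 2) / 2) := by
        rw [intervalIntegral.integral_const_mul, integral_id]
      have h12 : 2 ^ (-(p - 2)) * (μ + t) ^ (p - 2) * ((t ^ 2 - 0 ^ 2) / 2)
          ≤ C1 * ((μ + t) ^ (p - 2) * t ^ 2) := by
        have e2 : 2 ^ (-(p - 2)) * (μ + t) ^ (p - 2) * ((t ^ 2 - 0 ^ 2) / 2)
            = (2 ^ (-(p - 2)) / 2) * ((μ + t) ^ (p - 2) * t ^ 2) := by ring
        rw [e2]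
        apply mul_le_mul_of_nonneg_right _ hD
        have hA2 : (0:ℝ) ≤ 2 ^ (-(p - 2)) := by positivity
        have hB2 : (0:ℝ) ≤ 2 ^ (-(p - 2)) / p := by positivity
        rw [hC1]
        linarith
      exact le_trans hmono (le_trans (le_of_eq hval) h12)
    · -- μ ≤ t
      have hmono : (∫ s in (0:ℝ)..t, (μ + s) ^ (p - 2) * s)
          ≤ ∫ s in (0:ℝ)..t, s ^ (p - 1) := by
        apply intervalIntegral.integral_mono_on ht hint
          (intervalIntegral.intervalIntegrable_rpow' (by linarith))
        intro s hs
        by_cases hs0 : s = 0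
        · subst hs0
          simp [Real.zero_rpow (show p - 1 ≠ 0 by linarith)]
        · have hs' : 0 < s := lt_of_le_of_ne hs.1 (Ne.symm hs0)
          have e1 : (μ + s) ^ (p - 2) ≤ s ^ (p - 2) :=
            Real.rpow_le_rpow_of_nonpos hs' (by linarith) (by linarith)
          calc (μ + s) ^ (p - 2) * s ≤ s ^ (p - 2) * s :=
                mul_le_mul_of_nonneg_right e1 hs'.le
            _ = s ^ (p - 1) := by
                rw [show p - 1 = p - 2 + 1 by ring, Real.rpow_add hs', Real.rpow_one]
      have hval : (∫ s in (0:ℝ)..t, s ^ (p - 1)) = t ^ p / p := by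
        rw [integral_rpow (Or.inl (by linarith : (-1:ℝ) < p - 1))]
        rw [show p - 1 + 1 = p by ring, Real.zero_rpow (by linarith : p ≠ 0)]
        ring
      have htp : t ^ p = t ^ (p - 2) * t ^ 2 := by
        have h2' : t ^ (2:ℝ) = t ^ (2:ℕ) := by
          rw [show (2:ℝ) = ((2:ℕ):ℝ) by norm_num, Real.rpow_natCast]
        rw [← h2', ← Real.rpow_add h0]
        congr 1
        ring
      have e1 : t ^ (p - 2) ≤ 2 ^ (-(p - 2)) * (μ + t) ^ (p - 2) := by
        have := Real.rpow_le_rpow_of_nonpos (by positivity : (0:ℝ) < (μ + t)/2)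
          (by linarith : (μ + t)/2 ≤ t) (by linarith : p - 2 ≤ 0)
        rwa [half_pow hμt.le] at this
      have h12 : t ^ p / p ≤ C1 * ((μ + t) ^ (p - 2) * t ^ 2) := by
        rw [htp]
        have ht2 : (0:ℝ) ≤ t ^ 2 := sq_nonneg t
        have e2 : t ^ (p - 2) * t ^ 2 / p ≤ (2 ^ (-(p - 2)) / p) * ((μ + t) ^ (p - 2) * t ^ 2) := by
          rw [div_mul_eq_mul_div, div_le_div_iff₀ (by linarith) (by linarith)]
          nlinarith [mul_le_mul_of_nonneg_right e1 ht2]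
        apply le_trans e2
        apply mul_le_mul_of_nonneg_right _ hD
        have hA2 : (0:ℝ) ≤ 2 ^ (-(p - 2)) := by positivity
        have hB2 : (0:ℝ) ≤ 2 ^ (-(p - 2)) / p := by positivity
        rw [hC1]
        linarith
      exact le_trans hmono (le_trans (le_of_eq hval) h12)


lemma phiShift_eq {p δ a : ℝ} (hδ : 0 ≤ δ) (ha : 0 ≤ a) {t : ℝ} (ht : 0 ≤ t) :
    phiShift p δ a t = ∫ s in (0:ℝ)..t, (δ + a + s) ^ (p - 2) * s := by
  apply intervalIntegral.integral_congr
  intro s hs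
  rw [uIcc_of_le ht] at hs
  simp only [phiDeriv]
  rcases eq_or_lt_of_le (add_nonneg ha hs.1) with h | h
  · have hs0 : s = 0 := by linarith [hs.1]
    rw [hs0]
    simp
  · have he : δ + (a + s) = δ + a + s := by ring
    rw [he]
    field_simp

lemma young {p : ℝ} (hp : 1 < p) {c1 : ℝ} (hc1 : 0 < c1) (hc1' : c1 ≤ 1) :
    ∃ C2 : ℝ, 0 < C2 ∧ ∀ μ : ℝ, 0 ≤ μ → ∀ s : ℝ, 0 ≤ s → ∀ t : ℝ, 0 ≤ t →
      s * t ≤ c1 * ((μ + t) ^ (p - 2) * t ^ 2)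
        + C2 * ((μ ^ (p - 1) + s) ^ (p / (p - 1) - 2) * s ^ 2) := by
  obtain ⟨κ, hκ, hdual⟩ := G_dual_lower hp
  set q := p / (p - 1) with hqdef
  set κ' := min c1 (c1 ^ (q - 1)) * κ with hκ'def
  have hκ'0 : 0 < κ' := mul_pos (lt_min hc1 (Real.rpow_pos_of_pos hc1 _)) hκ
  have hp1 : (0:ℝ) < p - 1 := by linarith
  have hq1 : 1 < q := by rw [hqdef, one_lt_div hp1]; linarith
  refine ⟨1 / κ', by positivity, fun μ hμ s hs t ht => ?_⟩
  have hb : 0 ≤ μ ^ (p - 1) := Real.rpow_nonneg hμ _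
  have hB : 0 ≤ (μ ^ (p - 1) + s) ^ (q - 2) * s ^ 2 := by positivity
  have hA : 0 ≤ (μ + t) ^ (p - 2) * t ^ 2 := by positivity
  have hC2B : 0 ≤ 1 / κ' * ((μ ^ (p - 1) + s) ^ (q - 2) * s ^ 2) := by positivity
  have hc1A : 0 ≤ c1 * ((μ + t) ^ (p - 2) * t ^ 2) := by positivity
  rcases eq_or_lt_of_le ht with h0 | h0
  · rw [← h0]; nlinarith
  rcases eq_or_lt_of_le hs with hs0 | hs0
  · rw [← hs0]; nlinarith
  have hGpos : 0 < G p μ t := G_pos hμ h0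
  rcases le_or_gt s (c1 * G p μ t) with hcase | hcase
  · have h1 : s * t ≤ c1 * G p μ t * t := mul_le_mul_of_nonneg_right hcase ht
    have h2 : c1 * G p μ t * t = c1 * ((μ + t) ^ (p - 2) * t ^ 2) := by
      rw [G]; ring
    nlinarith
  · have m2 : κ * t ≤ G q (μ ^ (p - 1)) (G p μ t) := hdual μ hμ t h0
    have m1 : min c1 (c1 ^ (q - 1)) * G q (μ ^ (p - 1)) (G p μ t)
        ≤ G q (μ ^ (p - 1)) (c1 * G p μ t) :=
      G_scale_lower hq1 hb hc1 hc1' hGpos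
    have m3 : G q (μ ^ (p - 1)) (c1 * G p μ t) ≤ G q (μ ^ (p - 1)) s :=
      G_mono hq1 hb (by positivity) hcase.le
    have h1 : κ' * t ≤ G q (μ ^ (p - 1)) s := by
      calc κ' * t = min c1 (c1 ^ (q - 1)) * (κ * t) := by rw [hκ'def]; ring
        _ ≤ min c1 (c1 ^ (q - 1)) * G q (μ ^ (p - 1)) (G p μ t) :=
            mul_le_mul_of_nonneg_left m2 (le_min hc1.le (Real.rpow_pos_of_pos hc1 _).le)
        _ ≤ G q (μ ^ (p - 1)) (c1 * G p μ t) := m1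
        _ ≤ G q (μ ^ (p - 1)) s := m3
    have h2' : t ≤ 1 / κ' * G q (μ ^ (p - 1)) s := by
      rw [div_mul_eq_mul_div, one_mul, le_div_iff₀ hκ'0, mul_comm]
      exact h1
    have h2 : s * t ≤ s * (1 / κ' * G q (μ ^ (p - 1)) s) :=
      mul_le_mul_of_nonneg_left h2' hs
    have h3 : s * (1 / κ' * G q (μ ^ (p - 1)) s)
        = 1 / κ' * ((μ ^ (p - 1) + s) ^ (q - 2) * s ^ 2) := by
      rw [G]; ring
    nlinarith

end PhiAux

/-- For `p ∈ (1,∞)` and `p' = p/(p−1)`, there exist constants `c, C > 0` depending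
only on `p` such that for all `δ ≥ 0`, all shifts `a ≥ 0` and all `t ≥ 0`:
`c·(δ+a+t)^{p−2} t² ≤ φ_a(t) ≤ C·(δ+a+t)^{p−2} t²` and
`c·((δ+a)^{p−1}+t)^{p'−2} t² ≤ (φ_a)*(t) ≤ C·((δ+a)^{p−1}+t)^{p'−2} t²`. -/
theorem phiShift_equiv (p : ℝ) (hp : 1 < p) :
    ∃ c C : ℝ, 0 < c ∧ 0 < C ∧
      ∀ δ : ℝ, 0 ≤ δ → ∀ a : ℝ, 0 ≤ a → ∀ t : ℝ, 0 ≤ t →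
        (c * (δ + a + t) ^ (p - 2) * t ^ 2 ≤ phiShift p δ a t ∧
          phiShift p δ a t ≤ C * (δ + a + t) ^ (p - 2) * t ^ 2) ∧
        (c * ((δ + a) ^ (p - 1) + t) ^ (p / (p - 1) - 2) * t ^ 2
            ≤ conjFun (phiShift p δ a) t ∧
          conjFun (phiShift p δ a) t
            ≤ C * ((δ + a) ^ (p - 1) + t) ^ (p / (p - 1) - 2) * t ^ 2) := by
  classical
  obtain ⟨c1, hc10, hc11, Flow⟩ := PhiAux.F_lower hp
  obtain ⟨C1, hC10, Fupp⟩ := PhiAux.F_upper hp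
  obtain ⟨C2, hC20, hyoung⟩ := PhiAux.young hp hc10 hc11
  have hp1 : (0:ℝ) < p - 1 := by linarith
  set q := p / (p - 1) with hqdef
  have hq1 : 1 < q := by rw [hqdef, one_lt_div hp1]; linarith
  obtain ⟨K, hK0, hdualU⟩ := PhiAux.G_dual_upper hq1
  have hqm1 : q - 1 = 1 / (p - 1) := by
    rw [hqdef]
    field_simp
    ring
  have hqq : q / (q - 1) = p := by
    rw [hqm1, hqdef]
    field_simp
  set η := 1 / (2 * C1 * K) with hηdef
  have hη0 : 0 < η := by positivity
  set ε := min 1 (min η (η ^ (1 / (p - 1)))) with hεdef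
  have hε0 : 0 < ε := lt_min one_pos (lt_min hη0 (Real.rpow_pos_of_pos hη0 _))
  have hε1 : ε ≤ 1 := min_le_left _ _
  have hεη : ε ≤ η := le_trans (min_le_right _ _) (min_le_left _ _)
  have hεp : ε ^ (p - 1) ≤ η := by
    calc ε ^ (p - 1) ≤ (η ^ (1 / (p - 1))) ^ (p - 1) :=
        Real.rpow_le_rpow hε0.le (le_trans (min_le_right _ _) (min_le_right _ _)) (by linarith)
      _ = η := by
        rw [← Real.rpow_mul hη0.le, one_div, inv_mul_cancel₀ (ne_of_gt hp1), Real.rpow_one]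
  have hεmax : max ε (ε ^ (p - 1)) ≤ η := max_le hεη hεp
  have hhalf : C1 * (max ε (ε ^ (p - 1)) * K) ≤ 1 / 2 := by
    have he : C1 * (η * K) = 1 / 2 := by
      rw [hηdef]
      field_simp
    calc C1 * (max ε (ε ^ (p - 1)) * K) ≤ C1 * (η * K) :=
        mul_le_mul_of_nonneg_left (mul_le_mul_of_nonneg_right hεmax hK0.le) hC10.le
      _ = 1/2 := he
  refine ⟨min c1 (ε / 2), max C1 C2, lt_min hc10 (by positivity), lt_max_of_lt_left hC10,
    fun δ hδ a ha t ht => ?_⟩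
  set μ := δ + a with hμdef
  have hμ : 0 ≤ μ := add_nonneg hδ ha
  have hb : 0 ≤ μ ^ (p - 1) := Real.rpow_nonneg hμ _
  have hA : (0:ℝ) ≤ (μ + t) ^ (p - 2) * t ^ 2 := by positivity
  have hBt : (0:ℝ) ≤ (μ ^ (p - 1) + t) ^ (q - 2) * t ^ 2 := by positivity
  have hFlow : ∀ u : ℝ, 0 ≤ u → c1 * ((μ + u) ^ (p - 2) * u ^ 2) ≤ phiShift p δ a u := by
    intro u hu
    rw [PhiAux.phiShift_eq hδ ha hu]
    exact Flow μ hμ u hu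
  have hFupp : ∀ u : ℝ, 0 ≤ u → phiShift p δ a u ≤ C1 * ((μ + u) ^ (p - 2) * u ^ 2) := by
    intro u hu
    rw [PhiAux.phiShift_eq hδ ha hu]
    exact Fupp μ hμ u hu
  have hSdef : conjFun (phiShift p δ a) t
      = sSup ((fun u => t * u - phiShift p δ a u) '' Set.Ici 0) := rfl
  have helem : ∀ x ∈ (fun u => t * u - phiShift p δ a u) '' Set.Ici (0:ℝ),
      x ≤ C2 * ((μ ^ (p - 1) + t) ^ (q - 2) * t ^ 2) := by
    rintro x ⟨u, hu, rfl⟩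
    have hu0 : (0:ℝ) ≤ u := hu
    have hy := hyoung μ hμ t ht u hu0
    have hfl := hFlow u hu0
    dsimp only
    linarith
  have hbdd : BddAbove ((fun u => t * u - phiShift p δ a u) '' Set.Ici (0:ℝ)) :=
    ⟨_, fun x hx => helem x hx⟩
  refine ⟨⟨?_, ?_⟩, ?_, ?_⟩
  · -- lower bound for φ
    have h1 : min c1 (ε / 2) * (μ + t) ^ (p - 2) * t ^ 2
        ≤ c1 * ((μ + t) ^ (p - 2) * t ^ 2) := by
      rw [mul_assoc]
      exact mul_le_mul_of_nonneg_right (min_le_left _ _) hA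
    linarith [hFlow t ht]
  · -- upper bound for φ
    have h1 : C1 * ((μ + t) ^ (p - 2) * t ^ 2) ≤ max C1 C2 * (μ + t) ^ (p - 2) * t ^ 2 := by
      rw [mul_assoc]
      exact mul_le_mul_of_nonneg_right (le_max_left _ _) hA
    linarith [hFupp t ht]
  · -- lower bound for conjugate
    rcases eq_or_lt_of_le ht with h0 | h0
    · have h00 : t * 0 - phiShift p δ a 0
          ∈ (fun u => t * u - phiShift p δ a u) '' Set.Ici (0:ℝ) :=
        Set.mem_image_of_mem _ (Set.mem_Ici.mpr le_rfl)
      have hval0 : t * 0 - phiShift p δ a 0 = 0 := by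
        simp [phiShift, intervalIntegral.integral_same]
      have hge : (0:ℝ) ≤ conjFun (phiShift p δ a) t := by
        rw [hSdef]
        calc (0:ℝ) = t * 0 - phiShift p δ a 0 := hval0.symm
          _ ≤ sSup ((fun u => t * u - phiShift p δ a u) '' Set.Ici 0) := le_csSup hbdd h00
      have hLHS : min c1 (ε / 2) * (μ ^ (p - 1) + t) ^ (q - 2) * t ^ 2 = 0 := by
        rw [← h0]
        ring
      linarith
    · set u0 := ε * PhiAux.G q (μ ^ (p - 1)) t with hu0def
      have hGt : 0 < PhiAux.G q (μ ^ (p - 1)) t := PhiAux.G_pos hb h0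
      have hu00 : 0 < u0 := by positivity
      have helem0 : t * u0 - phiShift p δ a u0
          ∈ (fun u => t * u - phiShift p δ a u) '' Set.Ici (0:ℝ) :=
        Set.mem_image_of_mem _ (Set.mem_Ici.mpr hu00.le)
      have hcs := le_csSup hbdd helem0
      have hbq : (μ ^ (p - 1)) ^ (q - 1) = μ := by
        rw [← Real.rpow_mul hμ]
        have he1 : (p - 1) * (q - 1) = 1 := by
          rw [hqm1]
          field_simp
        rw [he1, Real.rpow_one]
      have hdu : PhiAux.G p μ (PhiAux.G q (μ ^ (p - 1)) t) ≤ K * t := by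
        have h1 := hdualU (μ ^ (p - 1)) hb t h0
        rw [hqq, hbq] at h1
        exact h1
      have hscale : PhiAux.G p μ u0
          ≤ max ε (ε ^ (p - 1)) * PhiAux.G p μ (PhiAux.G q (μ ^ (p - 1)) t) :=
        PhiAux.G_scale_upper hp hμ hε0 hε1 hGt
      have hGu0 : PhiAux.G p μ u0 ≤ max ε (ε ^ (p - 1)) * (K * t) :=
        le_trans hscale (mul_le_mul_of_nonneg_left hdu
          (le_max_of_le_left hε0.le))
      have hFu0 : phiShift p δ a u0 ≤ C1 * (PhiAux.G p μ u0 * u0) := by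
        have h1 := hFupp u0 hu00.le
        have h2 : (μ + u0) ^ (p - 2) * u0 ^ 2 = PhiAux.G p μ u0 * u0 := by
          rw [PhiAux.G]; ring
        rw [h2] at h1
        exact h1
      have hFu0' : phiShift p δ a u0 ≤ 1 / 2 * (t * u0) := by
        calc phiShift p δ a u0 ≤ C1 * (PhiAux.G p μ u0 * u0) := hFu0
          _ ≤ C1 * (max ε (ε ^ (p - 1)) * (K * t) * u0) :=
            mul_le_mul_of_nonneg_left (mul_le_mul_of_nonneg_right hGu0 hu00.le) hC10.le
          _ = C1 * (max ε (ε ^ (p - 1)) * K) * (t * u0) := by ring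
          _ ≤ 1 / 2 * (t * u0) :=
            mul_le_mul_of_nonneg_right hhalf (by positivity)
      have hval : 1 / 2 * (t * u0) = ε / 2 * (PhiAux.G q (μ ^ (p - 1)) t * t) := by
        rw [hu0def]; ring
      have hBB : ε / 2 * (PhiAux.G q (μ ^ (p - 1)) t * t)
          = ε / 2 * ((μ ^ (p - 1) + t) ^ (q - 2) * t ^ 2) := by
        rw [PhiAux.G]; ring
      have hLHS : min c1 (ε / 2) * (μ ^ (p - 1) + t) ^ (q - 2) * t ^ 2
          ≤ ε / 2 * ((μ ^ (p - 1) + t) ^ (q - 2) * t ^ 2) := by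
        rw [mul_assoc]
        exact mul_le_mul_of_nonneg_right (min_le_right _ _) hBt
      rw [hSdef]
      have : t * u0 - phiShift p δ a u0
          ≤ sSup ((fun u => t * u - phiShift p δ a u) '' Set.Ici 0) := hcs
      linarith
  · -- upper bound for conjugate
    have h1 : conjFun (phiShift p δ a) t ≤ C2 * ((μ ^ (p - 1) + t) ^ (q - 2) * t ^ 2) := by
      rw [hSdef]
      exact Real.sSup_le helem (by positivity)
    have h2 : C2 * ((μ ^ (p - 1) + t) ^ (q - 2) * t ^ 2)
        ≤ max C1 C2 * (μ ^ (p - 1) + t) ^ (q - 2) * t ^ 2 := by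
      rw [mul_assoc]
      exact mul_le_mul_of_nonneg_right (le_max_right _ _) hBt
    linarith
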